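/- For all p, q ∈ ℕ: if p + q is odd then ∫_{ℝ²} xᵖ·w^q·p(x,w) dx dw = 0; and if p + q is even then ∫_{ℝ²} xᵖ·w^q·p(x,w) dx dw = Σ_k (p−k−1)!!·C(p,k)·C(q,k)·k!·(q−k−1)!!·σii^((p−k)/2)·σij^k·σjj^((q−k)/2), where the sum runs over all k with 0 ≤ k ≤ min(p,q) and k ≡ p (mod 2), C(n,k) denotes the binomial coefficient, and (2m−1)!! := (2m)!/(2^m·m!) with (−1)!! := 1. -/

import Mathlib

open MeasureTheory Real

/-- Centered bivariate Gaussian density with covariance entries `σii, σjj, σij`. -/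
noncomputable def gaussPDF2 (σii σjj σij : ℝ) (x w : ℝ) : ℝ :=
  (1 / (2 * π * Real.sqrt (σii * σjj - σij ^ 2))) *
    Real.exp (-(σjj * x ^ 2 - 2 * σij * x * w + σii * w ^ 2) / (2 * (σii * σjj - σij ^ 2)))

/-- Centered univariate Gaussian density with variance `σ`. -/
noncomputable def gaussPDF1 (σ x : ℝ) : ℝ :=
  (1 / Real.sqrt (2 * π * σ)) * Real.exp (-x ^ 2 / (2 * σ))

/-- Transformed mean `ν(f)`. -/
noncomputable def transMean (σ : ℝ) (f : ℝ → ℝ) : ℝ := ∫ x : ℝ, f x * gaussPDF1 σ x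

/-- Transformed covariance `τ(f, g)`. -/
noncomputable def transCov (σii σjj σij : ℝ) (f g : ℝ → ℝ) : ℝ :=
  (∫ q : ℝ × ℝ, f q.1 * g q.2 * gaussPDF2 σii σjj σij q.1 q.2) -
    transMean σii f * transMean σjj g

/-- The odd double factorial: `oddDoubleFactorial m = (2m-1)!! = (2m)!/(2^m m!)`,
with the convention `(-1)!! = oddDoubleFactorial 0 = 1`. -/
noncomputable def oddDoubleFactorial (m : ℕ) : ℝ :=
  (Nat.factorial (2 * m) : ℝ) / ((2 : ℝ) ^ m * (Nat.factorial m : ℝ))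

open Filter Topology

lemma oddDF_zero : oddDoubleFactorial 0 = 1 := by simp [oddDoubleFactorial]

lemma oddDF_succ (m : ℕ) :
    oddDoubleFactorial (m + 1) = (2 * m + 1) * oddDoubleFactorial m := by
  unfold oddDoubleFactorial
  have h1 : 2 * (m + 1) = (2 * m + 1) + 1 := by ring
  rw [h1, Nat.factorial_succ, Nat.factorial_succ, Nat.factorial_succ]
  have h2 : ((2:ℝ) ^ m * (Nat.factorial m : ℝ)) ≠ 0 := by positivity
  have h3 : (Nat.factorial (2*m) : ℝ) ≥ 0 := by positivity
  push_cast
  field_simp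
  ring

noncomputable def wickTerm (σii σjj σij : ℝ) (p q k : ℕ) : ℝ :=
  oddDoubleFactorial ((p - k) / 2) * (p.choose k : ℝ) * (q.choose k : ℝ) *
    (k.factorial : ℝ) * oddDoubleFactorial ((q - k) / 2) *
    σii ^ ((p - k) / 2) * σij ^ k * σjj ^ ((q - k) / 2)

noncomputable def wickS (σii σjj σij : ℝ) (p q : ℕ) : ℝ :=
  ∑ k ∈ Finset.range (p + 1),
    if k % 2 = p % 2 then wickTerm σii σjj σij p q k else 0

lemma wickS_eq_stmt (σii σjj σij : ℝ) (p q : ℕ) :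
    (∑ k ∈ (Finset.range (min p q + 1)).filter (fun k => k % 2 = p % 2),
      oddDoubleFactorial ((p - k) / 2) * (p.choose k : ℝ) * (q.choose k : ℝ) *
        (k.factorial : ℝ) * oddDoubleFactorial ((q - k) / 2) *
        σii ^ ((p - k) / 2) * σij ^ k * σjj ^ ((q - k) / 2)) = wickS σii σjj σij p q := by
  rw [Finset.sum_filter, wickS]
  apply Finset.sum_subset
  · intro k hk
    simp only [Finset.mem_range] at hk ⊢
    omega
  · intro k hk hk'
    simp only [Finset.mem_range] at hk hk'
    have hq : q < k := by omega
    simp [wickTerm, Nat.choose_eq_zero_of_lt hq]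

lemma natN1 (q p : ℕ) :
    q * (q-1).choose p * p.factorial = q.choose (p+1) * (p+1).factorial := by
  cases q with
  | zero => simp
  | succ q' =>
    have := Nat.add_one_mul_choose_eq q' p
    simp only [Nat.succ_eq_add_one, Nat.add_sub_cancel]
    rw [Nat.factorial_succ (p)]
    calc (q'+1) * q'.choose p * p.factorial = ((q'+1).choose (p+1) * (p+1)) * p.factorial := by
          rw [this]
      _ = (q'+1).choose (p+1) * ((p+1) * p.factorial) := by ring

lemma natN2 (p j : ℕ) (hp : 1 ≤ p) :
    (p-1).choose j * p = p.choose j * (p - j) := by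
  have := Nat.choose_mul_succ_eq (p-1) j
  rwa [Nat.sub_add_cancel hp] at this

lemma wickS_rec1 (σii σjj σij : ℝ) (p q : ℕ) :
    wickS σii σjj σij (p+1) q =
      σii * p * wickS σii σjj σij (p-1) q + σij * q * wickS σii σjj σij p (q-1) := by
  cases p with
  | zero =>
    simp only [Nat.cast_zero, mul_zero, zero_mul, zero_add, Nat.zero_sub]
    rw [wickS, wickS]
    rw [Finset.sum_range_succ, Finset.sum_range_succ, Finset.sum_range_zero,
      Finset.sum_range_succ, Finset.sum_range_zero]
    norm_num [wickTerm, oddDF_zero, Nat.choose_one_right]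
    ring
  | succ p' =>
    set P := p' + 1 with hP
    have hP1 : 1 ≤ P := Nat.le_add_left 1 p'
    -- A : extended first sum
    have hA : σii * (P:ℝ) * wickS σii σjj σij p' q
        = ∑ k ∈ Finset.range (P + 2),
            σii * (P:ℝ) * (if k % 2 = p' % 2 then wickTerm σii σjj σij p' q k else 0) := by
      rw [wickS, Finset.mul_sum]
      apply Finset.sum_subset
      · intro k hk; simp only [Finset.mem_range] at hk ⊢; omega
      · intro k hk hk'
        simp only [Finset.mem_range] at hk hk'
        have hk2 : k = p' + 1 ∨ k = p' + 2 := by omega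
        rcases hk2 with h | h
        · subst h
          have : (p' + 1) % 2 ≠ p' % 2 := by omega
          simp [this]
        · subst h
          have hlt : p' < p' + 2 := by omega
          simp [wickTerm, Nat.choose_eq_zero_of_lt hlt]
    have hPm : P - 1 = p' := by omega
    rw [hPm, hA, wickS, wickS, Finset.mul_sum]
    show (∑ k ∈ Finset.range (P + 1 + 1), _) = _
    rw [Finset.sum_range_succ' _ (P + 1), Finset.sum_range_succ' _ (P + 1)]
    have hsplit : ∀ k ∈ Finset.range (P + 1),
        (if (k+1) % 2 = (P+1) % 2 then wickTerm σii σjj σij (P+1) q (k+1) else 0)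
        = σii * (P:ℝ) * (if (k+1) % 2 = p' % 2 then wickTerm σii σjj σij p' q (k+1) else 0)
          + σij * (q:ℝ) * (if k % 2 = P % 2 then wickTerm σii σjj σij P (q-1) k else 0) := by
      intro k hk
      simp only [Finset.mem_range] at hk
      have hkP : k ≤ P := by omega
      by_cases hpar : k % 2 = P % 2
      · have h1 : (k+1) % 2 = (P+1) % 2 := by omega
        have h2 : (k+1) % 2 = p' % 2 := by omega
        rw [if_pos h1, if_pos h2, if_pos hpar]
        -- now the pure term identity
        obtain ⟨m, hm⟩ : ∃ m, P - k = 2 * m := by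
          refine ⟨(P - k)/2, ?_⟩; omega
        have e1 : (P + 1 - (k+1)) = 2 * m := by omega
        have eq1 : (P + 1 - (k+1))/2 = m := by omega
        have eq0 : (P - k)/2 = m := by omega
        have eqq : (q - 1 - k) = q - (k+1) := by omega
        cases m with
        | zero =>
          have hkP' : k = P := by omega
          have hz : p' < k + 1 := by omega
          have hc1 : (P+1).choose (k+1) = 1 := by rw [hkP']; exact Nat.choose_self _
          have hc2 : P.choose k = 1 := by rw [hkP']; exact Nat.choose_self _
          have hN1' : ((q:ℝ)) * ((q-1).choose k : ℝ) * (k.factorial : ℝ)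
              = (q.choose (k+1) : ℝ) * ((k+1).factorial : ℝ) := by
            exact_mod_cast congrArg (Nat.cast : ℕ → ℝ) (natN1 q k)
          rw [wickTerm, wickTerm, wickTerm, Nat.choose_eq_zero_of_lt hz, hc1, hc2]
          have e2 : P + 1 - (k + 1) = 0 := by omega
          have e3 : P - k = 0 := by omega
          rw [eqq, e2, e3]
          simp only [Nat.zero_div, oddDF_zero, Nat.cast_one, Nat.cast_zero, pow_zero, pow_succ]
          linear_combination (- (oddDoubleFactorial ((q - (k+1))/2) * σij^k * σij *
            σjj^((q-(k+1))/2))) * hN1'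
        | succ m' =>
          have e4 : (p' - (k+1)) = 2 * m' := by omega
          have eq4 : (p' - (k+1))/2 = m' := by omega
          rw [wickTerm, wickTerm, wickTerm, eq1, eq4, eq0, eqq]
          have hN1' : ((q:ℝ)) * ((q-1).choose k : ℝ) * (k.factorial : ℝ)
              = (q.choose (k+1) : ℝ) * ((k+1).factorial : ℝ) := by
            exact_mod_cast congrArg (Nat.cast : ℕ → ℝ) (natN1 q k)
          have hN2' : ((p'.choose (k+1) : ℝ)) * (P:ℝ)
              = (P.choose (k+1) : ℝ) * (2*(m':ℝ)+1) := by
            have := natN2 P (k+1) hP1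
            have h5 : P - (k+1) = 2*m' + 1 := by omega
            rw [h5] at this
            have : ((P - 1).choose (k + 1) * P : ℕ) = (P.choose (k + 1) * (2 * m' + 1) : ℕ) := this
            have hP' : P - 1 = p' := by omega
            rw [hP'] at this
            exact_mod_cast congrArg (Nat.cast : ℕ → ℝ) this
          have hch : ((P+1).choose (k+1) : ℝ) = (P.choose k : ℝ) + (P.choose (k+1) : ℝ) := by
            exact_mod_cast congrArg (Nat.cast : ℕ → ℝ) (Nat.choose_succ_succ P k)
          rw [hP] at hN2'
          push_cast at hN2'
          rw [oddDF_succ m', hch]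
          rw [pow_succ σii m', pow_succ σij k]
          push_cast
          have hPr : (P:ℝ) = (p':ℝ) + 1 := by rw [hP]; push_cast; ring
          rw [hPr]
          linear_combination
            (- (oddDoubleFactorial m' * (q.choose (k+1):ℝ) * ((k+1).factorial:ℝ) *
               oddDoubleFactorial ((q - (k+1))/2) * σii * σii^m' * σij^k * σij *
               σjj^((q-(k+1))/2))) * hN2'
            + (- ((2*(m':ℝ)+1) * oddDoubleFactorial m' * ((P:ℕ).choose k : ℝ) *
               oddDoubleFactorial ((q - (k+1))/2) * σii^m' * σii * σij^k * σij *
               σjj^((q-(k+1))/2))) * hN1'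
      · have h1 : (k+1) % 2 ≠ (P+1) % 2 := by omega
        have h2 : (k+1) % 2 ≠ p' % 2 := by omega
        rw [if_neg h1, if_neg h2, if_neg hpar]
        ring
    rw [Finset.sum_congr rfl hsplit]
    rw [Finset.sum_add_distrib]
    -- remains: the k = 0 boundary terms
    have hbound : (if 0 % 2 = (P+1) % 2 then wickTerm σii σjj σij (P+1) q 0 else 0)
        = σii * (P:ℝ) * (if 0 % 2 = p' % 2 then wickTerm σii σjj σij p' q 0 else 0) := by
      by_cases hpar : 0 % 2 = p' % 2
      · have h1 : 0 % 2 = (P+1) % 2 := by omega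
        rw [if_pos h1, if_pos hpar]
        obtain ⟨m, hm⟩ : ∃ m, p' = 2 * m := by refine ⟨p'/2, ?_⟩; omega
        rw [wickTerm, wickTerm]
        have e1 : (P + 1 - 0)/2 = m + 1 := by omega
        have e2 : (p' - 0)/2 = m := by omega
        rw [e1, e2, oddDF_succ m]
        have e3 : (P:ℝ) = 2*(m:ℝ)+1 := by rw [hP, hm]; push_cast; ring
        rw [pow_succ]
        simp only [Nat.choose_zero_right, Nat.cast_one, Nat.sub_zero]
        rw [e3]; ring
      · have h1 : 0 % 2 ≠ (P+1) % 2 := by omega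
        rw [if_neg h1, if_neg hpar]; ring
    rw [hbound]; ring

lemma wickS_zero_zero (σii σjj σij : ℝ) : wickS σii σjj σij 0 0 = 1 := by
  simp [wickS, wickTerm, oddDF_zero]

lemma wickS_rec2 (σii σjj σij : ℝ) (q : ℕ) (hq : q % 2 = 1) :
    wickS σii σjj σij 0 (q+1) = σjj * q * wickS σii σjj σij 0 (q-1) := by
  obtain ⟨m, hm⟩ : ∃ m, q = 2*m + 1 := ⟨q/2, by omega⟩
  rw [wickS, wickS]
  simp only [zero_add, Finset.sum_range_one, if_pos rfl]
  rw [wickTerm, wickTerm]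
  have e1 : (q + 1 - 0)/2 = m + 1 := by omega
  have e2 : (q - 1 - 0)/2 = m := by omega
  rw [e1, e2, oddDF_succ m]
  have e3 : (q:ℝ) = 2*(m:ℝ)+1 := by rw [hm]; push_cast; ring
  rw [e3, pow_succ]
  simp only [Nat.choose_zero_right, Nat.choose_self, Nat.cast_one, Nat.sub_zero,
    Nat.sub_self, Nat.zero_div, oddDF_zero, pow_zero]
  simp only [if_true, Nat.factorial_zero, Nat.cast_one]
  ring

lemma base_int (j : ℕ) {α : ℝ} (hα : 0 < α) :
    Integrable (fun y : ℝ => y ^ j * Real.exp (-α * y ^ 2)) := by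
  have h : (-1 : ℝ) < (j : ℝ) :=
    lt_of_lt_of_le (by norm_num) (Nat.cast_nonneg j)
  simpa [Real.rpow_natCast] using integrable_rpow_mul_exp_neg_mul_sq hα h

lemma int1d (n : ℕ) {α : ℝ} (hα : 0 < α) (β : ℝ) :
    Integrable (fun x : ℝ => x ^ n * Real.exp (-α * x ^ 2 + β * x)) := by
  set γ := β / (2 * α) with hγ
  have hg : Integrable (fun y : ℝ => (y + γ) ^ n * Real.exp (-α * y ^ 2)) := by
    have heq : (fun y : ℝ => (y + γ) ^ n * Real.exp (-α * y ^ 2))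
        = fun y => ∑ j ∈ Finset.range (n + 1),
            (γ ^ (n - j) * (n.choose j : ℝ)) * (y ^ j * Real.exp (-α * y ^ 2)) := by
      funext y
      rw [add_pow, Finset.sum_mul]
      congr 1; funext j; ring
    rw [heq]
    exact integrable_finset_sum _ fun j _ => (base_int j hα).const_mul _
  have h2 : Integrable (fun x : ℝ =>
      ((x - γ + γ) ^ n * Real.exp (-α * (x - γ) ^ 2)) * Real.exp (β ^ 2 / (4 * α))) :=
    (hg.comp_sub_right γ).mul_const _
  apply h2.congr
  filter_upwards with x
  rw [sub_add_cancel, mul_assoc, ← Real.exp_add]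
  congr 2
  rw [hγ]
  field_simp
  ring

lemma tend1d_top (n : ℕ) {α : ℝ} (hα : 0 < α) (β : ℝ) :
    Tendsto (fun x : ℝ => x ^ n * Real.exp (-α * x ^ 2 + β * x)) atTop (𝓝 0) := by
  apply squeeze_zero' (g := fun x : ℝ => x ^ n * Real.exp (-x))
  · filter_upwards [eventually_ge_atTop (0 : ℝ)] with x hx
    positivity
  · filter_upwards [eventually_ge_atTop (0 : ℝ),
      eventually_ge_atTop ((β + 1) / α)] with x hx0 hx1
    have h1 : -α * x ^ 2 + β * x ≤ -x := by nlinarith [(div_le_iff₀ hα).mp hx1]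
    exact mul_le_mul_of_nonneg_left (Real.exp_le_exp.mpr h1) (by positivity)
  · exact tendsto_pow_mul_exp_neg_atTop_nhds_zero n

lemma tend1d_bot (n : ℕ) {α : ℝ} (hα : 0 < α) (β : ℝ) :
    Tendsto (fun x : ℝ => x ^ n * Real.exp (-α * x ^ 2 + β * x)) atBot (𝓝 0) := by
  have h := ((tend1d_top n hα (-β)).const_mul ((-1 : ℝ) ^ n)).comp tendsto_neg_atBot_atTop
  have : ((-1 : ℝ) ^ n * 0) = 0 := by ring
  rw [this] at h
  apply h.congr
  intro x
  simp only [Function.comp_apply]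
  have h1 : ((-1:ℝ))^n * (-1:ℝ)^n = 1 := by
    rw [← pow_add]; exact Even.neg_one_pow ⟨n, rfl⟩
  rw [show (-α*(-x)^2 + -β*(-x)) = -α*x^2+β*x by ring, neg_pow x n]
  linear_combination (x^n * rexp (-α*x^2+β*x)) * h1

section PDF
variable {σii σjj σij : ℝ}

lemma cont_pdf : Continuous (fun z : ℝ × ℝ => gaussPDF2 σii σjj σij z.1 z.2) := by
  unfold gaussPDF2
  fun_prop

lemma quad_bound (x w : ℝ) :
    (x^2 + w^2) * (σii*σjj - σij^2) ≤ (σjj*x^2 - 2*σij*x*w + σii*w^2) * (σii + σjj) := by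
  nlinarith [sq_nonneg (σjj*x - σij*w), sq_nonneg (σij*x - σii*w)]

lemma pdf_le (hii : 0 < σii) (hjj : 0 < σjj) (hd : 0 < σii*σjj - σij^2) (x w : ℝ) :
    gaussPDF2 σii σjj σij x w ≤ (1 / (2 * π * Real.sqrt (σii * σjj - σij ^ 2))) *
      (Real.exp (-(2*(σii+σjj))⁻¹ * x^2) * Real.exp (-(2*(σii+σjj))⁻¹ * w^2)) := by
  set b := (2*(σii+σjj))⁻¹ with hb
  have hs : 0 < σii + σjj := by linarith
  have h2d : 0 < 2*(σii*σjj - σij^2) := by linarith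
  have hK : 0 < 1 / (2 * π * Real.sqrt (σii * σjj - σij ^ 2)) := by
    have := Real.sqrt_pos.mpr hd
    have := Real.pi_pos
    positivity
  rw [← Real.exp_add]
  apply mul_le_mul_of_nonneg_left _ hK.le
  apply Real.exp_le_exp.mpr
  have key : b*x^2 + b*w^2 ≤ (σjj*x^2 - 2*σij*x*w + σii*w^2)/(2*(σii*σjj-σij^2)) := by
    rw [le_div_iff₀ h2d]
    have e : (b*x^2+b*w^2)*(2*(σii*σjj-σij^2))
        = ((x^2+w^2)*(σii*σjj-σij^2))/(σii+σjj) := by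
      rw [hb]; field_simp
    rw [e, div_le_iff₀ hs]
    exact quad_bound x w
  have : -(σjj * x ^ 2 - 2 * σij * x * w + σii * w ^ 2) / (2 * (σii * σjj - σij ^ 2))
      = -((σjj * x ^ 2 - 2 * σij * x * w + σii * w ^ 2) / (2 * (σii * σjj - σij ^ 2))) := by
    ring
  rw [this]
  linarith [key]

lemma pdf_pos (hd : 0 < σii*σjj - σij^2) (x w : ℝ) : 0 < gaussPDF2 σii σjj σij x w := by
  unfold gaussPDF2
  have := Real.sqrt_pos.mpr hd
  have := Real.pi_pos
  positivity

lemma integrable2d (hii : 0 < σii) (hjj : 0 < σjj) (hd : 0 < σii*σjj - σij^2) (p q : ℕ) :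
    Integrable (fun z : ℝ × ℝ => z.1^p * z.2^q * gaussPDF2 σii σjj σij z.1 z.2) := by
  set b := (2*(σii+σjj))⁻¹ with hb
  have hs : 0 < σii + σjj := by linarith
  have hb0 : 0 < b := by rw [hb]; positivity
  have habs : ∀ n : ℕ, Integrable (fun x : ℝ => |x|^n * Real.exp (-b*x^2)) := by
    intro n
    apply (base_int n hb0).abs.congr
    filter_upwards with x
    rw [abs_mul, abs_pow, abs_of_pos (Real.exp_pos _)]
  have hprod : Integrable (fun z : ℝ × ℝ =>
      (1 / (2 * π * Real.sqrt (σii * σjj - σij ^ 2))) *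
      ((|z.1|^p * Real.exp (-b*z.1^2)) * (|z.2|^q * Real.exp (-b*z.2^2)))) := by
    rw [MeasureTheory.Measure.volume_eq_prod]
    exact ((habs p).mul_prod (habs q)).const_mul _
  apply hprod.mono'
  · exact ((continuous_fst.pow p).mul (continuous_snd.pow q)).mul cont_pdf
      |>.aestronglyMeasurable
  · filter_upwards with z
    have hpos := pdf_pos hd z.1 z.2 (σii := σii) (σjj := σjj) (σij := σij)
    have hle := pdf_le hii hjj hd z.1 z.2
    have hK : 0 < 1 / (2 * π * Real.sqrt (σii * σjj - σij ^ 2)) := by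
      have := Real.sqrt_pos.mpr hd
      have := Real.pi_pos
      positivity
    rw [Real.norm_eq_abs, abs_mul, abs_mul, abs_pow, abs_pow, abs_of_pos hpos]
    calc |z.1|^p * |z.2|^q * gaussPDF2 σii σjj σij z.1 z.2
        ≤ |z.1|^p * |z.2|^q * ((1 / (2 * π * Real.sqrt (σii * σjj - σij ^ 2))) *
            (Real.exp (-b*z.1^2) * Real.exp (-b*z.2^2))) := by
          apply mul_le_mul_of_nonneg_left hle (by positivity)
      _ = (1 / (2 * π * Real.sqrt (σii * σjj - σij ^ 2))) *
            ((|z.1|^p * Real.exp (-b*z.1^2)) * (|z.2|^q * Real.exp (-b*z.2^2))) := by ring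

end PDF

section Slice
variable {σii σjj σij : ℝ}

lemma pdf_slice_x (hii : 0 < σii) (hjj : 0 < σjj) (hd : 0 < σii*σjj - σij^2) (w x : ℝ) :
    gaussPDF2 σii σjj σij x w =
      ((1 / (2 * π * Real.sqrt (σii * σjj - σij ^ 2))) *
        Real.exp (-(σii/(2*(σii*σjj - σij^2))) * w^2)) *
      Real.exp (-(σjj/(2*(σii*σjj - σij^2))) * x^2 + (σij*w/(σii*σjj - σij^2)) * x) := by
  unfold gaussPDF2
  conv_rhs => rw [mul_assoc, ← Real.exp_add]
  congr 1
  field_simp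
  ring

lemma pdf_slice_w (hii : 0 < σii) (hjj : 0 < σjj) (hd : 0 < σii*σjj - σij^2) (x w : ℝ) :
    gaussPDF2 σii σjj σij x w =
      ((1 / (2 * π * Real.sqrt (σii * σjj - σij ^ 2))) *
        Real.exp (-(σjj/(2*(σii*σjj - σij^2))) * x^2)) *
      Real.exp (-(σii/(2*(σii*σjj - σij^2))) * w^2 + (σij*x/(σii*σjj - σij^2)) * w) := by
  unfold gaussPDF2
  conv_rhs => rw [mul_assoc, ← Real.exp_add]
  congr 1
  field_simp
  ring

lemma int_slice_x (hii : 0 < σii) (hjj : 0 < σjj) (hd : 0 < σii*σjj - σij^2)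
    (n : ℕ) (w : ℝ) :
    Integrable (fun x : ℝ => x^n * gaussPDF2 σii σjj σij x w) := by
  have hα : 0 < σjj/(2*(σii*σjj - σij^2)) := by positivity
  have := (int1d n hα (σij*w/(σii*σjj - σij^2))).const_mul
    ((1 / (2 * π * Real.sqrt (σii * σjj - σij ^ 2))) *
      Real.exp (-(σii/(2*(σii*σjj - σij^2))) * w^2))
  apply this.congr
  filter_upwards with x
  rw [pdf_slice_x hii hjj hd w x]
  ring

lemma int_slice_w (hii : 0 < σii) (hjj : 0 < σjj) (hd : 0 < σii*σjj - σij^2)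
    (n : ℕ) (x : ℝ) :
    Integrable (fun w : ℝ => w^n * gaussPDF2 σii σjj σij x w) := by
  have hα : 0 < σii/(2*(σii*σjj - σij^2)) := by positivity
  have := (int1d n hα (σij*x/(σii*σjj - σij^2))).const_mul
    ((1 / (2 * π * Real.sqrt (σii * σjj - σij ^ 2))) *
      Real.exp (-(σjj/(2*(σii*σjj - σij^2))) * x^2))
  apply this.congr
  filter_upwards with w
  rw [pdf_slice_w hii hjj hd x w]
  ring

lemma tend_slice_x_top (hii : 0 < σii) (hjj : 0 < σjj) (hd : 0 < σii*σjj - σij^2)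
    (n : ℕ) (w : ℝ) :
    Tendsto (fun x : ℝ => x^n * gaussPDF2 σii σjj σij x w) atTop (𝓝 0) := by
  have hα : 0 < σjj/(2*(σii*σjj - σij^2)) := by positivity
  have h := (tend1d_top n hα (σij*w/(σii*σjj - σij^2))).const_mul
    ((1 / (2 * π * Real.sqrt (σii * σjj - σij ^ 2))) *
      Real.exp (-(σii/(2*(σii*σjj - σij^2))) * w^2))
  rw [mul_zero] at h
  apply h.congr
  intro x
  rw [pdf_slice_x hii hjj hd w x]
  ring

lemma tend_slice_x_bot (hii : 0 < σii) (hjj : 0 < σjj) (hd : 0 < σii*σjj - σij^2)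
    (n : ℕ) (w : ℝ) :
    Tendsto (fun x : ℝ => x^n * gaussPDF2 σii σjj σij x w) atBot (𝓝 0) := by
  have hα : 0 < σjj/(2*(σii*σjj - σij^2)) := by positivity
  have h := (tend1d_bot n hα (σij*w/(σii*σjj - σij^2))).const_mul
    ((1 / (2 * π * Real.sqrt (σii * σjj - σij ^ 2))) *
      Real.exp (-(σii/(2*(σii*σjj - σij^2))) * w^2))
  rw [mul_zero] at h
  apply h.congr
  intro x
  rw [pdf_slice_x hii hjj hd w x]
  ring

lemma tend_slice_w_top (hii : 0 < σii) (hjj : 0 < σjj) (hd : 0 < σii*σjj - σij^2)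
    (n : ℕ) (x : ℝ) :
    Tendsto (fun w : ℝ => w^n * gaussPDF2 σii σjj σij x w) atTop (𝓝 0) := by
  have hα : 0 < σii/(2*(σii*σjj - σij^2)) := by positivity
  have h := (tend1d_top n hα (σij*x/(σii*σjj - σij^2))).const_mul
    ((1 / (2 * π * Real.sqrt (σii * σjj - σij ^ 2))) *
      Real.exp (-(σjj/(2*(σii*σjj - σij^2))) * x^2))
  rw [mul_zero] at h
  apply h.congr
  intro w
  rw [pdf_slice_w hii hjj hd x w]
  ring

lemma tend_slice_w_bot (hii : 0 < σii) (hjj : 0 < σjj) (hd : 0 < σii*σjj - σij^2)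
    (n : ℕ) (x : ℝ) :
    Tendsto (fun w : ℝ => w^n * gaussPDF2 σii σjj σij x w) atBot (𝓝 0) := by
  have hα : 0 < σii/(2*(σii*σjj - σij^2)) := by positivity
  have h := (tend1d_bot n hα (σij*x/(σii*σjj - σij^2))).const_mul
    ((1 / (2 * π * Real.sqrt (σii * σjj - σij ^ 2))) *
      Real.exp (-(σjj/(2*(σii*σjj - σij^2))) * x^2))
  rw [mul_zero] at h
  apply h.congr
  intro w
  rw [pdf_slice_w hii hjj hd x w]
  ring

lemma hasDerivAt_quad (A B C x : ℝ) :
    HasDerivAt (fun t : ℝ => A*t^2 + B*t + C) (2*A*x + B) x := by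
  have h := (((hasDerivAt_pow 2 x).const_mul A).add
    ((hasDerivAt_id x).const_mul B)).add_const C
  refine h.congr_deriv ?_
  simp; ring

lemma hasDerivAt_pdf_x (hd : 0 < σii*σjj - σij^2) (w x : ℝ) :
    HasDerivAt (fun x => gaussPDF2 σii σjj σij x w)
      (-((σjj*x - σij*w)/(σii*σjj - σij^2)) * gaussPDF2 σii σjj σij x w) x := by
  have hfun : (fun x : ℝ => -(σjj * x ^ 2 - 2 * σij * x * w + σii * w ^ 2) /
      (2 * (σii * σjj - σij ^ 2)))
      = fun t : ℝ => (-σjj/(2 * (σii * σjj - σij ^ 2)))*t^2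
          + (σij*w/(σii * σjj - σij ^ 2))*t
          + (-(σii*w^2)/(2 * (σii * σjj - σij ^ 2))) := by
    funext t
    field_simp
    ring
  have hq : HasDerivAt (fun x : ℝ => -(σjj * x ^ 2 - 2 * σij * x * w + σii * w ^ 2) /
      (2 * (σii * σjj - σij ^ 2)))
      (2*(-σjj/(2 * (σii * σjj - σij ^ 2)))*x + σij*w/(σii * σjj - σij ^ 2)) x := by
    rw [hfun]
    exact hasDerivAt_quad _ _ _ x
  have h2 := (hq.exp).const_mul (1 / (2 * π * Real.sqrt (σii * σjj - σij ^ 2)))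
  unfold gaussPDF2
  refine h2.congr_deriv ?_
  field_simp
  ring

lemma hasDerivAt_pdf_w (hd : 0 < σii*σjj - σij^2) (x w : ℝ) :
    HasDerivAt (fun w => gaussPDF2 σii σjj σij x w)
      (-((σii*w - σij*x)/(σii*σjj - σij^2)) * gaussPDF2 σii σjj σij x w) w := by
  have hfun : (fun w : ℝ => -(σjj * x ^ 2 - 2 * σij * x * w + σii * w ^ 2) /
      (2 * (σii * σjj - σij ^ 2)))
      = fun t : ℝ => (-σii/(2 * (σii * σjj - σij ^ 2)))*t^2
          + (σij*x/(σii * σjj - σij ^ 2))*t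
          + (-(σjj*x^2)/(2 * (σii * σjj - σij ^ 2))) := by
    funext t
    field_simp
    ring
  have hq : HasDerivAt (fun w : ℝ => -(σjj * x ^ 2 - 2 * σij * x * w + σii * w ^ 2) /
      (2 * (σii * σjj - σij ^ 2)))
      (2*(-σii/(2 * (σii * σjj - σij ^ 2)))*w + σij*x/(σii * σjj - σij ^ 2)) w := by
    rw [hfun]
    exact hasDerivAt_quad _ _ _ w
  have h2 := (hq.exp).const_mul (1 / (2 * π * Real.sqrt (σii * σjj - σij ^ 2)))
  unfold gaussPDF2
  refine h2.congr_deriv ?_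
  field_simp
  ring

end Slice

noncomputable def momJ (σii σjj σij : ℝ) (p q : ℕ) : ℝ :=
  ∫ z : ℝ × ℝ, z.1^p * z.2^q * gaussPDF2 σii σjj σij z.1 z.2

section Stein
variable {σii σjj σij : ℝ}

lemma ZX (hii : 0 < σii) (hjj : 0 < σjj) (hd : 0 < σii*σjj - σij^2) (a b : ℕ) :
    ∫ z : ℝ × ℝ, ((a:ℝ)*(σii*σjj-σij^2)*z.1^(a-1)*z.2^b - σjj*z.1^(a+1)*z.2^b
        + σij*z.1^a*z.2^(b+1)) * gaussPDF2 σii σjj σij z.1 z.2 = 0 := by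
  have hdne : σii*σjj - σij^2 ≠ 0 := ne_of_gt hd
  set G : ℝ × ℝ → ℝ := fun z =>
    ((a:ℝ)*(σii*σjj-σij^2)*z.1^(a-1)*z.2^b - σjj*z.1^(a+1)*z.2^b
      + σij*z.1^a*z.2^(b+1)) * gaussPDF2 σii σjj σij z.1 z.2 with hG
  have hGint : Integrable G := by
    have i1 := (integrable2d hii hjj hd (a-1) b).const_mul ((a:ℝ)*(σii*σjj-σij^2))
    have i2 := (integrable2d hii hjj hd (a+1) b).const_mul σjj
    have i3 := (integrable2d hii hjj hd a (b+1)).const_mul σij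
    apply ((i1.sub i2).add i3).congr
    filter_upwards with z
    simp only [Pi.add_apply, Pi.sub_apply]
    rw [hG]; ring
  have hinner : ∀ w : ℝ, (∫ x : ℝ, G (x, w)) = 0 := by
    intro w
    have hder : ∀ x : ℝ, HasDerivAt
        (fun x => (σii*σjj-σij^2) * (x^a * w^b * gaussPDF2 σii σjj σij x w))
        (G (x, w)) x := by
      intro x
      have h1 := (((hasDerivAt_pow a x).mul_const (w^b)).mul
        (hasDerivAt_pdf_x hd w x)).const_mul (σii*σjj-σij^2)
      refine h1.congr_deriv ?_
      rw [hG]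
      field_simp
      ring
    have hint : Integrable (fun x : ℝ => G (x, w)) := by
      have i1 := (int_slice_x hii hjj hd (a-1) w).const_mul ((a:ℝ)*(σii*σjj-σij^2)*w^b)
      have i2 := (int_slice_x hii hjj hd (a+1) w).const_mul (σjj*w^b)
      have i3 := (int_slice_x hii hjj hd a w).const_mul (σij*w^(b+1))
      apply ((i1.sub i2).add i3).congr
      filter_upwards with x
      simp only [Pi.add_apply, Pi.sub_apply]
      rw [hG]; ring
    have htop : Tendsto (fun x : ℝ => (σii*σjj-σij^2) * (x^a * w^b * gaussPDF2 σii σjj σij x w))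
        atTop (𝓝 0) := by
      have h := (tend_slice_x_top hii hjj hd a w).const_mul ((σii*σjj-σij^2) * w^b)
      rw [mul_zero] at h
      apply h.congr
      intro x; ring
    have hbot : Tendsto (fun x : ℝ => (σii*σjj-σij^2) * (x^a * w^b * gaussPDF2 σii σjj σij x w))
        atBot (𝓝 0) := by
      have h := (tend_slice_x_bot hii hjj hd a w).const_mul ((σii*σjj-σij^2) * w^b)
      rw [mul_zero] at h
      apply h.congr
      intro x; ring
    have hz := MeasureTheory.integral_of_hasDerivAt_of_tendsto hder hint hbot htop
    rw [hz]; ring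
  rw [MeasureTheory.Measure.volume_eq_prod] at hGint
  calc (∫ z : ℝ × ℝ, G z) = ∫ z, G z ∂(volume.prod volume) := by
        rw [MeasureTheory.Measure.volume_eq_prod]
    _ = ∫ w : ℝ, ∫ x : ℝ, G (x, w) := integral_prod_symm _ hGint
    _ = ∫ _ : ℝ, (0:ℝ) := by congr 1; funext w; exact hinner w
    _ = 0 := integral_zero _ _

lemma ZW (hii : 0 < σii) (hjj : 0 < σjj) (hd : 0 < σii*σjj - σij^2) (a b : ℕ) :
    ∫ z : ℝ × ℝ, ((b:ℝ)*(σii*σjj-σij^2)*z.1^a*z.2^(b-1) - σii*z.1^a*z.2^(b+1)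
        + σij*z.1^(a+1)*z.2^b) * gaussPDF2 σii σjj σij z.1 z.2 = 0 := by
  have hdne : σii*σjj - σij^2 ≠ 0 := ne_of_gt hd
  set G : ℝ × ℝ → ℝ := fun z =>
    ((b:ℝ)*(σii*σjj-σij^2)*z.1^a*z.2^(b-1) - σii*z.1^a*z.2^(b+1)
      + σij*z.1^(a+1)*z.2^b) * gaussPDF2 σii σjj σij z.1 z.2 with hG
  have hGint : Integrable G := by
    have i1 := (integrable2d hii hjj hd a (b-1)).const_mul ((b:ℝ)*(σii*σjj-σij^2))
    have i2 := (integrable2d hii hjj hd a (b+1)).const_mul σii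
    have i3 := (integrable2d hii hjj hd (a+1) b).const_mul σij
    apply ((i1.sub i2).add i3).congr
    filter_upwards with z
    simp only [Pi.add_apply, Pi.sub_apply]
    rw [hG]; ring
  have hinner : ∀ x : ℝ, (∫ w : ℝ, G (x, w)) = 0 := by
    intro x
    have hder : ∀ w : ℝ, HasDerivAt
        (fun w => (σii*σjj-σij^2) * (x^a * w^b * gaussPDF2 σii σjj σij x w))
        (G (x, w)) w := by
      intro w
      have h1 := (((hasDerivAt_pow b w).const_mul (x^a)).mul
        (hasDerivAt_pdf_w hd x w)).const_mul (σii*σjj-σij^2)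
      refine h1.congr_deriv ?_
      rw [hG]
      field_simp
      ring
    have hint : Integrable (fun w : ℝ => G (x, w)) := by
      have i1 := (int_slice_w hii hjj hd (b-1) x).const_mul ((b:ℝ)*(σii*σjj-σij^2)*x^a)
      have i2 := (int_slice_w hii hjj hd (b+1) x).const_mul (σii*x^a)
      have i3 := (int_slice_w hii hjj hd b x).const_mul (σij*x^(a+1))
      apply ((i1.sub i2).add i3).congr
      filter_upwards with w
      simp only [Pi.add_apply, Pi.sub_apply]
      rw [hG]; ring
    have htop : Tendsto (fun w : ℝ => (σii*σjj-σij^2) * (x^a * w^b * gaussPDF2 σii σjj σij x w))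
        atTop (𝓝 0) := by
      have h := (tend_slice_w_top hii hjj hd b x).const_mul ((σii*σjj-σij^2) * x^a)
      rw [mul_zero] at h
      apply h.congr
      intro w; ring
    have hbot : Tendsto (fun w : ℝ => (σii*σjj-σij^2) * (x^a * w^b * gaussPDF2 σii σjj σij x w))
        atBot (𝓝 0) := by
      have h := (tend_slice_w_bot hii hjj hd b x).const_mul ((σii*σjj-σij^2) * x^a)
      rw [mul_zero] at h
      apply h.congr
      intro w; ring
    have hz := MeasureTheory.integral_of_hasDerivAt_of_tendsto hder hint hbot htop
    rw [hz]; ring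
  rw [MeasureTheory.Measure.volume_eq_prod] at hGint
  calc (∫ z : ℝ × ℝ, G z) = ∫ z, G z ∂(volume.prod volume) := by
        rw [MeasureTheory.Measure.volume_eq_prod]
    _ = ∫ x : ℝ, ∫ w : ℝ, G (x, w) := integral_prod _ hGint
    _ = ∫ _ : ℝ, (0:ℝ) := by congr 1; funext x; exact hinner x
    _ = 0 := integral_zero _ _

end Stein

section Stein2
variable {σii σjj σij : ℝ}

lemma E1 (hii : 0 < σii) (hjj : 0 < σjj) (hd : 0 < σii*σjj - σij^2) (a b : ℕ) :
    (a:ℝ)*(σii*σjj-σij^2) * momJ σii σjj σij (a-1) b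
      - σjj * momJ σii σjj σij (a+1) b + σij * momJ σii σjj σij a (b+1) = 0 := by
  have h := ZX hii hjj hd a b
  rw [show (∫ z : ℝ × ℝ, ((a:ℝ)*(σii*σjj-σij^2)*z.1^(a-1)*z.2^b - σjj*z.1^(a+1)*z.2^b
        + σij*z.1^a*z.2^(b+1)) * gaussPDF2 σii σjj σij z.1 z.2)
      = ∫ z : ℝ × ℝ, (((a:ℝ)*(σii*σjj-σij^2)) * (z.1^(a-1) * z.2^b * gaussPDF2 σii σjj σij z.1 z.2)
          - σjj * (z.1^(a+1) * z.2^b * gaussPDF2 σii σjj σij z.1 z.2))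
          + σij * (z.1^a * z.2^(b+1) * gaussPDF2 σii σjj σij z.1 z.2) from
    integral_congr_ae (by filter_upwards with z; ring)] at h
  have i1 := (integrable2d hii hjj hd (a-1) b).const_mul ((a:ℝ)*(σii*σjj-σij^2))
  have i2 := (integrable2d hii hjj hd (a+1) b).const_mul σjj
  have i3 := (integrable2d hii hjj hd a (b+1)).const_mul σij
  have i12 : Integrable (fun z : ℝ × ℝ =>
      ((a:ℝ)*(σii*σjj-σij^2)) * (z.1^(a-1) * z.2^b * gaussPDF2 σii σjj σij z.1 z.2)
      - σjj * (z.1^(a+1) * z.2^b * gaussPDF2 σii σjj σij z.1 z.2)) := i1.sub i2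
  rw [integral_add i12 i3, integral_sub i1 i2,
    integral_const_mul, integral_const_mul, integral_const_mul] at h
  unfold momJ
  linarith [h]

lemma E2 (hii : 0 < σii) (hjj : 0 < σjj) (hd : 0 < σii*σjj - σij^2) (a b : ℕ) :
    (b:ℝ)*(σii*σjj-σij^2) * momJ σii σjj σij a (b-1)
      - σii * momJ σii σjj σij a (b+1) + σij * momJ σii σjj σij (a+1) b = 0 := by
  have h := ZW hii hjj hd a b
  rw [show (∫ z : ℝ × ℝ, ((b:ℝ)*(σii*σjj-σij^2)*z.1^a*z.2^(b-1) - σii*z.1^a*z.2^(b+1)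
        + σij*z.1^(a+1)*z.2^b) * gaussPDF2 σii σjj σij z.1 z.2)
      = ∫ z : ℝ × ℝ, (((b:ℝ)*(σii*σjj-σij^2)) * (z.1^a * z.2^(b-1) * gaussPDF2 σii σjj σij z.1 z.2)
          - σii * (z.1^a * z.2^(b+1) * gaussPDF2 σii σjj σij z.1 z.2))
          + σij * (z.1^(a+1) * z.2^b * gaussPDF2 σii σjj σij z.1 z.2) from
    integral_congr_ae (by filter_upwards with z; ring)] at h
  have i1 := (integrable2d hii hjj hd a (b-1)).const_mul ((b:ℝ)*(σii*σjj-σij^2))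
  have i2 := (integrable2d hii hjj hd a (b+1)).const_mul σii
  have i3 := (integrable2d hii hjj hd (a+1) b).const_mul σij
  have i12 : Integrable (fun z : ℝ × ℝ =>
      ((b:ℝ)*(σii*σjj-σij^2)) * (z.1^a * z.2^(b-1) * gaussPDF2 σii σjj σij z.1 z.2)
      - σii * (z.1^a * z.2^(b+1) * gaussPDF2 σii σjj σij z.1 z.2)) := i1.sub i2
  rw [integral_add i12 i3, integral_sub i1 i2,
    integral_const_mul, integral_const_mul, integral_const_mul] at h
  unfold momJ
  linarith [h]

lemma steinX (hii : 0 < σii) (hjj : 0 < σjj) (hd : 0 < σii*σjj - σij^2) (a b : ℕ) :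
    momJ σii σjj σij (a+1) b = σii * a * momJ σii σjj σij (a-1) b
      + σij * b * momJ σii σjj σij a (b-1) := by
  have hdne : σii*σjj - σij^2 ≠ 0 := ne_of_gt hd
  have h1 := E1 hii hjj hd a b
  have h2 := E2 hii hjj hd a b
  have key : (σii*σjj - σij^2) * (momJ σii σjj σij (a+1) b
      - (σii * a * momJ σii σjj σij (a-1) b + σij * b * momJ σii σjj σij a (b-1))) = 0 := by
    linear_combination (-σii) * h1 + (-σij) * h2
  rcases mul_eq_zero.mp key with h | h
  · exact absurd h hdne
  · linarith [h]

lemma steinW (hii : 0 < σii) (hjj : 0 < σjj) (hd : 0 < σii*σjj - σij^2) (a b : ℕ) :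
    momJ σii σjj σij a (b+1) = σjj * b * momJ σii σjj σij a (b-1)
      + σij * a * momJ σii σjj σij (a-1) b := by
  have hdne : σii*σjj - σij^2 ≠ 0 := ne_of_gt hd
  have h1 := E1 hii hjj hd a b
  have h2 := E2 hii hjj hd a b
  have key : (σii*σjj - σij^2) * (momJ σii σjj σij a (b+1)
      - (σjj * b * momJ σii σjj σij a (b-1) + σij * a * momJ σii σjj σij (a-1) b)) = 0 := by
    linear_combination (-σij) * h1 + (-σjj) * h2
  rcases mul_eq_zero.mp key with h | h
  · exact absurd h hdne
  · linarith [h]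

lemma J00 (hii : 0 < σii) (hjj : 0 < σjj) (hd : 0 < σii*σjj - σij^2) :
    momJ σii σjj σij 0 0 = 1 := by
  have hdne : σii*σjj - σij^2 ≠ 0 := ne_of_gt hd
  have hsd : 0 < Real.sqrt (σii*σjj - σij^2) := Real.sqrt_pos.mpr hd
  have hpi := Real.pi_pos
  set c : ℝ := σii/(2*(σii*σjj-σij^2)) with hc
  have hc0 : 0 < c := by positivity
  have hint : Integrable (fun z : ℝ × ℝ => gaussPDF2 σii σjj σij z.1 z.2) := by
    apply (integrable2d hii hjj hd 0 0).congr
    filter_upwards with z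
    simp
  unfold momJ
  rw [show (∫ z : ℝ × ℝ, z.1^0 * z.2^0 * gaussPDF2 σii σjj σij z.1 z.2)
      = ∫ z : ℝ × ℝ, gaussPDF2 σii σjj σij z.1 z.2 from
    integral_congr_ae (by filter_upwards with z; simp)]
  rw [MeasureTheory.Measure.volume_eq_prod] at hint ⊢
  rw [integral_prod _ hint]
  have hsq : ∀ x w : ℝ, gaussPDF2 σii σjj σij x w =
      ((1 / (2 * π * Real.sqrt (σii * σjj - σij ^ 2))) * Real.exp (-(2*σii)⁻¹ * x^2)) *
        Real.exp (-c * (w - σij/σii*x)^2) := by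
    intro x w
    unfold gaussPDF2
    conv_rhs => rw [mul_assoc, ← Real.exp_add]
    congr 1
    rw [hc]
    have := hii.ne'
    congr 1
    field_simp
    linear_combination (-x^2) * (mul_inv_cancel₀ hdne)
  have hinner : ∀ x : ℝ, (∫ w : ℝ, gaussPDF2 σii σjj σij x w)
      = ((1 / (2 * π * Real.sqrt (σii * σjj - σij ^ 2))) * Real.sqrt (π/c))
        * Real.exp (-(2*σii)⁻¹ * x^2) := by
    intro x
    rw [show (∫ w : ℝ, gaussPDF2 σii σjj σij x w)
        = ∫ w : ℝ, ((1 / (2 * π * Real.sqrt (σii * σjj - σij ^ 2))) *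
            Real.exp (-(2*σii)⁻¹ * x^2)) * Real.exp (-c * (w - σij/σii*x)^2) from
      integral_congr_ae (by filter_upwards with w; rw [hsq x w])]
    rw [integral_const_mul]
    rw [show (∫ w : ℝ, Real.exp (-c * (w - σij/σii*x)^2))
        = ∫ w : ℝ, Real.exp (-c * w^2) from
      integral_sub_right_eq_self (fun y => Real.exp (-c * y^2)) (σij/σii*x)]
    rw [integral_gaussian]
    ring
  rw [show (∫ x : ℝ, ∫ w : ℝ, gaussPDF2 σii σjj σij (x, w).1 (x, w).2)
      = ∫ x : ℝ, ((1 / (2 * π * Real.sqrt (σii * σjj - σij ^ 2))) * Real.sqrt (π/c))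
          * Real.exp (-(2*σii)⁻¹ * x^2) from
    integral_congr_ae (by filter_upwards with x; exact hinner x)]
  rw [integral_const_mul, integral_gaussian]
  have h1 : π/c = 2*π*(σii*σjj-σij^2)/σii := by
    rw [hc]; field_simp
  have h2 : π/((2*σii)⁻¹ : ℝ) = 2*π*σii := by
    field_simp
  rw [h1, h2]
  have h3 : Real.sqrt (2*π*(σii*σjj-σij^2)/σii) * Real.sqrt (2*π*σii)
      = 2*π*Real.sqrt (σii*σjj-σij^2) := by
    rw [← Real.sqrt_mul (by positivity)]
    rw [show 2*π*(σii*σjj-σij^2)/σii*(2*π*σii) = (2*π)^2*(σii*σjj-σij^2) by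
      field_simp]
    rw [Real.sqrt_mul (by positivity), Real.sqrt_sq (by positivity)]
  rw [mul_assoc, h3]
  field_simp

end Stein2

section Master
variable {σii σjj σij : ℝ}

lemma master (hii : 0 < σii) (hjj : 0 < σjj) (hd : 0 < σii*σjj - σij^2) :
    ∀ n, ∀ p q : ℕ, p + q = n →
      momJ σii σjj σij p q = if Even n then wickS σii σjj σij p q else 0 := by
  intro n
  induction n using Nat.strong_induction_on with
  | _ n ih =>
    intro p q hpq
    cases p with
    | succ a =>
      rw [steinX hii hjj hd a q]
      have h1 : σii*(a:ℝ)*momJ σii σjj σij (a-1) q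
          = σii*(a:ℝ)*(if Even n then wickS σii σjj σij (a-1) q else 0) := by
        cases a with
        | zero => simp
        | succ a' =>
          have hlt : a' + q < n := by omega
          have := ih (a' + q) hlt a' q rfl
          have hpar : (Even (a' + q)) = (Even n) := by
            apply propext; simp only [Nat.even_iff]; omega
          simp only [Nat.add_sub_cancel]
          rw [this]; simp only [hpar]
      have h2 : σij*(q:ℝ)*momJ σii σjj σij a (q-1)
          = σij*(q:ℝ)*(if Even n then wickS σii σjj σij a (q-1) else 0) := by
        cases q with
        | zero => simp
        | succ q' =>
          have hlt : a + q' < n := by omega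
          have := ih (a + q') hlt a q' rfl
          have hpar : (Even (a + q')) = (Even n) := by
            apply propext; simp only [Nat.even_iff]; omega
          simp only [Nat.add_sub_cancel]
          rw [this]; simp only [hpar]
      rw [h1, h2]
      by_cases hE : Even n
      · rw [if_pos hE, if_pos hE, if_pos hE, wickS_rec1]
      · rw [if_neg hE, if_neg hE, if_neg hE]
        ring
    | zero =>
      cases q with
      | zero =>
        have hn : n = 0 := by omega
        subst hn
        rw [J00 hii hjj hd]
        simp [wickS_zero_zero]
      | succ b =>
        rw [steinW hii hjj hd 0 b]
        simp only [Nat.cast_zero, mul_zero, zero_mul, add_zero]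
        cases b with
        | zero =>
          have hn : n = 1 := by omega
          subst hn
          norm_num
        | succ b' =>
          have hlt : (0:ℕ) + b' < n := by omega
          have hIH := ih (0 + b') hlt 0 b' rfl
          simp only [Nat.zero_add] at hIH
          have hpar : (Even b') = (Even n) := by
            apply propext; simp only [Nat.even_iff]; omega
          simp only [Nat.add_sub_cancel]
          rw [hIH]; simp only [hpar]
          by_cases hE : Even n
          · rw [if_pos hE, if_pos hE]
            have hodd : (b' + 1) % 2 = 1 := by
              rw [Nat.even_iff] at hE; omega
            rw [wickS_rec2 σii σjj σij (b'+1) hodd]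
            simp only [Nat.add_sub_cancel]
          · rw [if_neg hE, if_neg hE]
            ring

end Master

theorem wick_mixed_moments
    (σii σjj σij : ℝ) (hii : 0 < σii) (hjj : 0 < σjj)
    (hd : 0 < σii * σjj - σij ^ 2) :
    ∀ p q : ℕ,
      (Odd (p + q) →
        ∫ z : ℝ × ℝ, z.1 ^ p * z.2 ^ q * gaussPDF2 σii σjj σij z.1 z.2 = 0) ∧
      (Even (p + q) →
        ∫ z : ℝ × ℝ, z.1 ^ p * z.2 ^ q * gaussPDF2 σii σjj σij z.1 z.2 =
          ∑ k ∈ (Finset.range (min p q + 1)).filter (fun k => k % 2 = p % 2),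
            oddDoubleFactorial ((p - k) / 2) * (p.choose k : ℝ) * (q.choose k : ℝ) *
              (k.factorial : ℝ) * oddDoubleFactorial ((q - k) / 2) *
              σii ^ ((p - k) / 2) * σij ^ k * σjj ^ ((q - k) / 2)) := by
  intro p q
  have hM := master hii hjj hd (p + q) p q rfl
  constructor
  · intro hodd
    have hne : ¬ Even (p + q) := by
      rw [Nat.even_iff]; rw [Nat.odd_iff] at hodd; omega
    rw [if_neg hne] at hM
    exact hM
  · intro heven
    rw [if_pos heven] at hM
    rw [show (∫ z : ℝ × ℝ, z.1 ^ p * z.2 ^ q * gaussPDF2 σii σjj σij z.1 z.2)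
        = momJ σii σjj σij p q from rfl, hM]
    exact (wickS_eq_stmt σii σjj σij p q).symm
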